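/- Sufficiency direction of the Characterization Theorem: let n ≥ 1 and let M : Fin n → Fin n → Bool be an opinion state. Suppose there exist a finite partition P of the set Fin n into non-empty blocks (factions) and a set C ⊆ Fin n (the core members) such that every block of P has non-empty intersection with C, and such that for all distinct agents i, j: M i j = true if and only if i and j lie in the same block of P and j ∈ C. Then M is an absorbing state. -/
import Mathlib


/-- A state `M` is absorbing if for all pairwise distinct agents `a z y`,
if `z` trusts `a` then `z` already agrees with `a` about `y`. -/
def Absorbing {n : ℕ} (M : Fin n → Fin n → Bool) : Prop :=
  ∀ a z y : Fin n, a ≠ z → a ≠ y → z ≠ y → M z a = true → M z y = M a y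

/-- Sufficiency direction of the Characterization Theorem: a state with
faction/core structure is absorbing. -/
theorem absorbing_of_faction_core {n : ℕ} (hn : 1 ≤ n)
    (M : Fin n → Fin n → Bool) (hdiag : ∀ i, M i i = false)
    (P : Finpartition (Finset.univ : Finset (Fin n))) (C : Finset (Fin n))
    (hcore : ∀ F ∈ P.parts, (F ∩ C).Nonempty)
    (hchar : ∀ i j : Fin n, i ≠ j →
      (M i j = true ↔ (∃ F ∈ P.parts, i ∈ F ∧ j ∈ F) ∧ j ∈ C)) :
    Absorbing M := by
  intro a z y haz hay hzy hza
  obtain ⟨⟨F, hF, hzF, haF⟩, haC⟩ := (hchar z a (Ne.symm haz)).1 hza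
  rw [Bool.eq_iff_iff, hchar z y hzy, hchar a y hay]
  constructor
  · rintro ⟨⟨G, hG, hzG, hyG⟩, hyC⟩
    have : G = F := P.eq_of_mem_parts hG hF hzG hzF
    exact ⟨⟨F, hF, haF, this ▸ hyG⟩, hyC⟩
  · rintro ⟨⟨G, hG, haG, hyG⟩, hyC⟩
    have : G = F := P.eq_of_mem_parts hG hF haG haF
    exact ⟨⟨F, hF, hzF, this ▸ hyG⟩, hyC⟩
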